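/- Let k ≥ 1 be an integer, let χ be a Dirichlet character modulo a positive integer N, and let r = ∏_p p^{α_p} be a positive integer. For all complex s with Re(s) > 1, ∑_{m=1}^∞ d_k(rm) χ(m) m^{-s} = g_k(s, r, χ) L(s, χ)^k, where L(s, χ) is the Dirichlet L-function of χ and g_k(s, r, χ) = ∏_{p | r} ( (1 - χ(p) p^{-s})^k ∑_{j=0}^∞ d_k(p^{j+α_p}) χ(p^j) p^{-js} ). -/

import Mathlib

/-- The `k`-th divisor function `d_k`, the `k`-fold Dirichlet convolution of the
constant function `1`. -/
noncomputable def dk (k : ℕ) : ArithmeticFunction ℕ := ArithmeticFunction.zeta ^ k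

/-- The twisted local factor
`g_k(s, r, χ) = ∏_{p | r} (1 - χ(p) p^{-s})^k ∑_{j≥0} d_k(p^{j+α_p}) χ(p^j) p^{-js}`,
where `r = ∏_p p^{α_p}`. -/
noncomputable def gkChi (k : ℕ) {N : ℕ} (χ : DirichletCharacter ℂ N) (s : ℂ) (r : ℕ) : ℂ :=
  ∏ p ∈ r.primeFactors,
    ((1 - χ p * (p : ℂ) ^ (-s)) ^ k *
      ∑' j : ℕ, (dk k (p ^ (j + r.factorization p)) : ℂ) * χ ((p : ZMod N) ^ j) *
        (p : ℂ) ^ (-(j : ℂ) * s))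

open ArithmeticFunction Finset

lemma dk_isMultiplicative (k : ℕ) : (dk k).IsMultiplicative := by
  induction k with
  | zero => exact ArithmeticFunction.isMultiplicative_one
  | succ n ih =>
      show ((ArithmeticFunction.zeta ^ n) * ArithmeticFunction.zeta).IsMultiplicative
      exact ih.mul ArithmeticFunction.isMultiplicative_zeta

lemma dk_succ_eq (k : ℕ) : dk (k+1) = dk k * ArithmeticFunction.zeta := by
  rw [dk, dk, pow_succ]

lemma dk_pos : ∀ (k : ℕ) {n : ℕ}, n ≠ 0 → 0 < dk (k+1) n := by
  intro k
  induction k with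
  | zero => intro n hn; simp [dk, pow_one, ArithmeticFunction.zeta_apply, hn]
  | succ m ih =>
      intro n hn
      have h : dk (m+2) n = ∑ i ∈ n.divisors, dk (m+1) i := by
        rw [dk_succ_eq, ArithmeticFunction.mul_zeta_apply]
      rw [h]
      exact Finset.sum_pos' (fun i _ => Nat.zero_le _)
        ⟨n, Nat.mem_divisors_self n hn, ih hn⟩

lemma dk_succ_prime_pow (k : ℕ) {p : ℕ} (hp : p.Prime) (e : ℕ) :
    dk (k+1) (p ^ e) = ∑ i ∈ range (e+1), dk k (p ^ i) := by
  rw [dk_succ_eq, ArithmeticFunction.mul_zeta_apply, Nat.sum_divisors_prime_pow hp]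

lemma dk_one_apply (k : ℕ) : dk k 1 = 1 := by
  induction k with
  | zero => simp [dk]
  | succ m ih => rw [dk_succ_eq, ArithmeticFunction.mul_zeta_apply]; simp [ih]

lemma dk_factor (k : ℕ) {r m n : ℕ} (hr : r ≠ 0) (hm : m ≠ 0) (hn : n ≠ 0)
    (h : Nat.Coprime m n) :
    dk k (r * (m * n)) * dk k r = dk k (r * m) * dk k (r * n) := by
  have hbig : r * (m * n) ≠ 0 := by positivity
  have key : ∀ x : ℕ, x ≠ 0 → x ∣ r * (m * n) →
      dk k x = ∏ p ∈ (r * (m * n)).primeFactors, dk k (p ^ x.factorization p) := by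
    intro x hx hdvd
    rw [ArithmeticFunction.IsMultiplicative.multiplicative_factorization _
      (dk_isMultiplicative k) hx, Finsupp.prod]
    refine Finset.prod_subset ?_ ?_
    · rw [Nat.support_factorization]
      exact Nat.primeFactors_mono hdvd hbig
    · intro p _ hps
      rw [Finsupp.notMem_support_iff.mp hps, pow_zero, (dk_isMultiplicative k).map_one]
  rw [key _ hbig dvd_rfl, key r hr (dvd_mul_right _ _),
    key (r*m) (by positivity) (mul_dvd_mul_left r (dvd_mul_right m n)),
    key (r*n) (by positivity) (mul_dvd_mul_left r (dvd_mul_left n m)),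
    ← Finset.prod_mul_distrib, ← Finset.prod_mul_distrib]
  refine Finset.prod_congr rfl fun p hp => ?_
  have hpp : p.Prime := Nat.prime_of_mem_primeFactors hp
  have hmn : m.factorization p = 0 ∨ n.factorization p = 0 := by
    by_contra hc
    push_neg at hc
    have h1 : p ∣ m := Nat.dvd_of_factorization_pos hc.1
    have h2 : p ∣ n := Nat.dvd_of_factorization_pos hc.2
    have hg : p ∣ Nat.gcd m n := Nat.dvd_gcd h1 h2
    rw [Nat.Coprime.gcd_eq_one h] at hg
    exact hpp.ne_one (Nat.dvd_one.mp hg)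
  rw [Nat.factorization_mul hr (mul_ne_zero hm hn), Nat.factorization_mul hm hn,
    Nat.factorization_mul hr hm, Nat.factorization_mul hr hn]
  simp only [Finsupp.add_apply]
  rcases hmn with h0 | h0 <;> rw [h0] <;> simp [mul_comm]

lemma dk_ord (k : ℕ) {p r : ℕ} (hp : p.Prime) (hr : r ≠ 0) (e : ℕ) :
    dk k (p ^ r.factorization p) * dk k (r * p ^ e) =
      dk k (p ^ (e + r.factorization p)) * dk k r := by
  set α := r.factorization p with hα
  have hco : Nat.Coprime p (r / p ^ α) := Nat.coprime_ordCompl hp hr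
  have hrd : p ^ α * (r / p ^ α) = r := Nat.ordProj_mul_ordCompl_eq_self r p
  have h1 : r * p ^ e = p ^ (α + e) * (r / p ^ α) := by
    conv_lhs => rw [← hrd]
    rw [pow_add]; ring
  have h2 : dk k r = dk k (p ^ α) * dk k (r / p ^ α) := by
    conv_lhs => rw [← hrd]
    exact (dk_isMultiplicative k).map_mul_of_coprime (hco.pow_left _)
  have h3 : dk k (r * p ^ e) = dk k (p ^ (α + e)) * dk k (r / p ^ α) := by
    rw [h1]
    exact (dk_isMultiplicative k).map_mul_of_coprime (hco.pow_left _)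
  rw [h2, h3, add_comm e α]
  ring

lemma dk_LSeriesSummable (k : ℕ) {z : ℂ} (hz : 1 < z.re) :
    LSeriesSummable (fun n : ℕ => (dk k n : ℂ)) z := by
  induction k with
  | zero =>
      refine summable_of_ne_finset_zero (s := {(1 : ℕ)}) fun n hn => ?_
      have hn1 : n ≠ 1 := by simpa using hn
      rcases eq_or_ne n 0 with rfl | hn0
      · simp [LSeries.term]
      · simp [LSeries.term, hn0, dk, ArithmeticFunction.one_apply, hn1]
  | succ m ih =>
      have hz' : LSeriesSummable (fun n : ℕ => ((ArithmeticFunction.zeta n : ℕ) : ℂ)) z :=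
        (ArithmeticFunction.LSeriesSummable_zeta_iff).mpr hz
      have h1 : LSeriesSummable (fun n : ℕ => ((dk m : ArithmeticFunction ℂ) n)) z :=
        (LSeriesSummable_congr (f := fun n : ℕ => (dk m n : ℂ)) z
          (fun hn => by simp [ArithmeticFunction.natCoe_apply])).mp ih
      have h2 : LSeriesSummable (fun n : ℕ =>
          (((ArithmeticFunction.zeta : ArithmeticFunction ℕ) : ArithmeticFunction ℂ) n)) z :=
        (LSeriesSummable_congr (f := fun n : ℕ => ((ArithmeticFunction.zeta n : ℕ) : ℂ)) z
          (fun hn => by simp [ArithmeticFunction.natCoe_apply])).mp hz'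
      have h := ArithmeticFunction.LSeriesSummable_mul h1 h2
      refine (LSeriesSummable_congr z (f := fun n : ℕ => (((dk m : ArithmeticFunction ℂ) *
        ((ArithmeticFunction.zeta : ArithmeticFunction ℕ) : ArithmeticFunction ℂ)) n))
        (fun hn => ?_)).mp h
      rw [← ArithmeticFunction.natCoe_mul, ← dk_succ_eq]
      simp [ArithmeticFunction.natCoe_apply]

lemma dk_summable_real (k : ℕ) {v : ℝ} (hv : 1 < v) :
    Summable (fun n : ℕ => (dk k n : ℝ) * (n : ℝ) ^ (-v)) := by
  have h := dk_LSeriesSummable k (z := (v : ℂ)) (by simpa using hv)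
  have key : ∀ n : ℕ, LSeries.term (fun n : ℕ => (dk k n : ℂ)) (v : ℂ) n
      = (((dk k n : ℝ) * (n : ℝ) ^ (-v) : ℝ) : ℂ) := by
    intro n
    rcases eq_or_ne n 0 with rfl | hn0
    · simp [LSeries.term, ArithmeticFunction.map_zero]
    · have hnp : (0 : ℝ) < (n : ℝ) := by positivity
      rw [LSeries.term_of_ne_zero hn0]
      rw [show ((n : ℂ) : ℂ) ^ (v : ℂ) = (((n : ℝ) ^ v : ℝ) : ℂ) by
        rw [Complex.ofReal_cpow hnp.le]; norm_num]
      rw [Real.rpow_neg hnp.le, ← Complex.ofReal_natCast (dk k n)]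
      rw [← Complex.ofReal_div]
      norm_num [div_eq_mul_inv]
  exact Complex.summable_ofReal.mp (h.congr key)

lemma dk_summable_shift (k : ℕ) {r : ℕ} (hr : r ≠ 0) {v : ℝ} (hv : 1 < v) :
    Summable (fun m : ℕ => (dk k (r * m) : ℝ) * (m : ℝ) ^ (-v)) := by
  have h1 := dk_summable_real k hv
  have h2 : Summable (fun m : ℕ => (dk k (r * m) : ℝ) * ((r * m : ℕ) : ℝ) ^ (-v)) :=
    h1.comp_injective (mul_right_injective₀ hr)
  have h3 := h2.mul_left ((r : ℝ) ^ v)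
  refine h3.congr fun m => ?_
  rcases eq_or_ne m 0 with rfl | hm0
  · simp [ArithmeticFunction.map_zero]
  · have hrp : (0 : ℝ) < (r : ℝ) := by positivity
    have hmp : (0 : ℝ) < (m : ℝ) := by positivity
    push_cast
    rw [Real.mul_rpow hrp.le hmp.le]
    rw [Real.rpow_neg hrp.le (v)]
    field_simp

lemma dk_geom (k : ℕ) {p : ℕ} (hp : p.Prime) {x : ℂ} (hx : ‖x‖ < 1) :
    Summable (fun e : ℕ => ‖(dk k (p ^ e) : ℂ) * x ^ e‖) ∧
      ∑' e : ℕ, (dk k (p ^ e) : ℂ) * x ^ e = ((1 - x)⁻¹) ^ k := by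
  induction k with
  | zero =>
      have hcoef : ∀ e : ℕ, e ≠ 0 → (dk 0 (p ^ e) : ℂ) * x ^ e = 0 := by
        intro e he
        have : p ^ e ≠ 1 := Nat.one_lt_pow he hp.one_lt |>.ne'
        simp [dk, ArithmeticFunction.one_apply, this, hp.ne_one, he]
      constructor
      · refine summable_of_ne_finset_zero (s := {(0 : ℕ)}) fun e he => ?_
        rw [hcoef e (by simpa using he), norm_zero]
      · rw [tsum_eq_single 0 (fun e he => hcoef e he)]
        simp [dk_one_apply]
  | succ k ih =>
      obtain ⟨ihs, iht⟩ := ih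
      have hgeo : Summable (fun e : ℕ => ‖x ^ e‖) := by
        refine Summable.congr (summable_geometric_of_lt_one (norm_nonneg x) hx) fun e => ?_
        rw [norm_pow]
      have hterm : ∀ e : ℕ,
          ∑ ij ∈ Finset.HasAntidiagonal.antidiagonal e, ((dk k (p ^ ij.1) : ℂ) * x ^ ij.1) * x ^ ij.2
            = (dk (k+1) (p ^ e) : ℂ) * x ^ e := by
        intro e
        rw [Finset.Nat.sum_antidiagonal_eq_sum_range_succ_mk, dk_succ_prime_pow k hp e]
        push_cast
        rw [Finset.sum_mul]
        refine Finset.sum_congr rfl fun i hi => ?_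
        have hile : i ≤ e := Nat.lt_succ_iff.mp (Finset.mem_range.mp hi)
        rw [mul_assoc, ← pow_add, Nat.add_sub_cancel' hile]
      constructor
      · have h2 := summable_norm_sum_mul_antidiagonal_of_summable_norm ihs hgeo
        refine h2.congr fun e => ?_
        rw [hterm e]
      · have h3 := tsum_mul_tsum_eq_tsum_sum_antidiagonal_of_summable_norm ihs hgeo
        rw [iht, tsum_geometric_of_norm_lt_one hx] at h3
        rw [pow_succ, h3]
        exact tsum_congr fun e => (hterm e).symm

/-- For `Re(s) > 1`,
`∑_{m≥1} d_k(rm) χ(m) m^{-s} = g_k(s, r, χ) L(s, χ)^k`, where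
`L(s, χ) = ∑_{n≥1} χ(n) n^{-s}` is the Dirichlet `L`-function of `χ`. -/
theorem tsum_dk_chi_eq_gkChi_mul_L_pow (k : ℕ) (hk : 1 ≤ k) {N : ℕ} (hN : 0 < N)
    (χ : DirichletCharacter ℂ N) (r : ℕ) (hr : 1 ≤ r) (s : ℂ) (hs : 1 < s.re) :
    ∑' m : ℕ, (dk k (r * m) : ℂ) * χ m * (m : ℂ) ^ (-s) =
      gkChi k χ s r * (∑' n : ℕ, χ n * (n : ℂ) ^ (-s)) ^ k := by
  have hs0 : s ≠ 0 := by
    intro h; rw [h] at hs; simp at hs; linarith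
  have hns : -s ≠ 0 := neg_ne_zero.mpr hs0
  have hr0 : r ≠ 0 := by omega
  -- the completely multiplicative function `n ↦ χ(n) n^{-s}`
  let f₀ : ℕ →*₀ ℂ :=
    { toFun := fun n => χ n * (n : ℂ) ^ (-s)
      map_zero' := by simp [Complex.zero_cpow hns]
      map_one' := by simp
      map_mul' := fun a b => by
        push_cast
        rw [map_mul χ, Complex.natCast_mul_natCast_cpow]
        ring }
  have hf₀app : ∀ n : ℕ, f₀ n = χ n * (n : ℂ) ^ (-s) := fun n => rfl
  have hf₀le : ∀ n : ℕ, ‖f₀ n‖ ≤ (dk 1 n : ℝ) * (n : ℝ) ^ (-s.re) := by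
    intro n
    rcases eq_or_ne n 0 with rfl | hn0
    · simp [hf₀app, Complex.zero_cpow hns, ArithmeticFunction.map_zero]
    · have hnp : 0 < n := Nat.pos_of_ne_zero hn0
      have hdk1 : (dk 1 n : ℝ) = 1 := by
        simp [dk, pow_one, ArithmeticFunction.zeta_apply, hn0]
      rw [hf₀app, norm_mul, Complex.norm_natCast_cpow_of_pos hnp, Complex.neg_re, hdk1, one_mul]
      calc ‖χ (n : ZMod N)‖ * (n : ℝ) ^ (-s.re)
          ≤ 1 * (n : ℝ) ^ (-s.re) := by
            gcongr
            exact χ.norm_le_one _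
        _ = (n : ℝ) ^ (-s.re) := one_mul _
  have hsum₀ : Summable (fun n : ℕ => ‖f₀ n‖) :=
    Summable.of_nonneg_of_le (fun _ => norm_nonneg _) hf₀le (dk_summable_real 1 hs)
  have hL : HasProd (fun p : Nat.Primes => (1 - f₀ (p : ℕ))⁻¹) (∑' n : ℕ, f₀ n) :=
    EulerProduct.eulerProduct_completely_multiplicative_hasProd hsum₀
  have hLk : HasProd (fun p : Nat.Primes => ((1 - f₀ (p : ℕ))⁻¹) ^ k) ((∑' n : ℕ, f₀ n) ^ k) := by
    clear hk
    induction k with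
    | zero => simpa using hasProd_one
    | succ m ih => simpa [pow_succ] using ih.mul hL
  -- `G m = d_k(rm)/d_k(r) · χ(m) m^{-s}` is multiplicative on coprime arguments
  have hDpos : 0 < dk k r := by
    obtain ⟨k', rfl⟩ : ∃ k', k = k' + 1 := ⟨k - 1, by omega⟩
    exact dk_pos k' hr0
  have hD : ((dk k r : ℂ)) ≠ 0 := Nat.cast_ne_zero.mpr hDpos.ne'
  set G : ℕ → ℂ := fun m => (dk k (r * m) : ℂ) / (dk k r : ℂ) * f₀ m with hGdef
  have hG1 : G 1 = 1 := by
    rw [hGdef]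
    simp only [mul_one, map_one, Nat.cast_one]
    exact div_self hD
  have hG0 : G 0 = 0 := by
    rw [hGdef]; simp
  have hGmul : ∀ {a b : ℕ}, Nat.Coprime a b → G (a * b) = G a * G b := by
    intro a b hab
    rcases eq_or_ne a 0 with rfl | ha0
    · have hb1 : b = 1 := by simpa using hab
      subst hb1; simp [hG0, hG1]
    rcases eq_or_ne b 0 with rfl | hb0
    · have ha1 : a = 1 := by simpa using hab
      subst ha1; simp [hG0, hG1]
    have hkey : (dk k (r * (a * b)) : ℂ) * (dk k r : ℂ)
        = (dk k (r * a) : ℂ) * (dk k (r * b) : ℂ) := by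
      exact_mod_cast congrArg (fun t : ℕ => (t : ℂ)) (dk_factor k hr0 ha0 hb0 hab)
    have hdiv : (dk k (r * (a * b)) : ℂ) / (dk k r : ℂ)
        = (dk k (r * a) : ℂ) / (dk k r : ℂ) * ((dk k (r * b) : ℂ) / (dk k r : ℂ)) := by
      rw [div_mul_div_comm, div_eq_div_iff hD (mul_ne_zero hD hD)]
      linear_combination (dk k r : ℂ) * hkey
    rw [hGdef]
    simp only [map_mul]
    rw [hdiv]
    ring
  have hGsum : Summable (fun m : ℕ => ‖G m‖) := by
    have hmaj : Summable (fun m : ℕ =>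
        ((dk k r : ℝ))⁻¹ * ((dk k (r * m) : ℝ) * (m : ℝ) ^ (-s.re))) :=
      (dk_summable_shift k hr0 hs).mul_left _
    refine Summable.of_nonneg_of_le (fun _ => norm_nonneg _) (fun m => ?_) hmaj
    rcases eq_or_ne m 0 with rfl | hm0
    · rw [hG0, norm_zero]
      simp [ArithmeticFunction.map_zero]
    · have hmp : 0 < m := Nat.pos_of_ne_zero hm0
      rw [hGdef]
      simp only
      rw [norm_mul, norm_div, Complex.norm_natCast, Complex.norm_natCast, hf₀app, norm_mul,
        Complex.norm_natCast_cpow_of_pos hmp, Complex.neg_re]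
      have h1 : ‖χ (m : ZMod N)‖ ≤ 1 := χ.norm_le_one _
      have h2 : (0:ℝ) ≤ (m : ℝ) ^ (-s.re) := Real.rpow_nonneg (by positivity) _
      have h3 : (0:ℝ) ≤ (dk k (r * m) : ℝ) / (dk k r : ℝ) := by positivity
      calc (dk k (r * m) : ℝ) / (dk k r : ℝ) * (‖χ (m : ZMod N)‖ * (m : ℝ) ^ (-s.re))
          ≤ (dk k (r * m) : ℝ) / (dk k r : ℝ) * (1 * (m : ℝ) ^ (-s.re)) := by
            gcongr
        _ = ((dk k r : ℝ))⁻¹ * ((dk k (r * m) : ℝ) * (m : ℝ) ^ (-s.re)) := by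
            rw [one_mul, div_eq_inv_mul]; ring
  have hG : HasProd (fun p : Nat.Primes => ∑' e : ℕ, G ((p : ℕ) ^ e)) (∑' m : ℕ, G m) :=
    EulerProduct.eulerProduct_hasProd hG1 hGmul hGsum hG0
  -- the finite set of primes dividing `r`, as a `Finset Nat.Primes`
  let emb : {q // q ∈ r.primeFactors} ↪ Nat.Primes :=
    ⟨fun q => ⟨q.1, Nat.prime_of_mem_primeFactors q.2⟩,
     fun a b hab => Subtype.ext (show a.1 = b.1 from
       congrArg (Subtype.val : Nat.Primes → ℕ) hab)⟩
  let S : Finset Nat.Primes := r.primeFactors.attach.map emb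
  have hmemS : ∀ p : Nat.Primes, p ∈ S ↔ (p : ℕ) ∈ r.primeFactors := by
    intro p
    constructor
    · intro hp
      obtain ⟨q, _, rfl⟩ := Finset.mem_map.mp hp
      exact q.2
    · intro hp
      exact Finset.mem_map.mpr ⟨⟨(p : ℕ), hp⟩, Finset.mem_attach _ _, Subtype.ext rfl⟩
  have hprodS : ∀ F : ℕ → ℂ, ∏ p ∈ S, F (p : ℕ) = ∏ q ∈ r.primeFactors, F q := by
    intro F
    rw [Finset.prod_map]
    exact Finset.prod_attach _ _
  -- the two finitely supported factors
  let eF : Nat.Primes → ℂ := fun p =>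
    if (p : ℕ) ∈ r.primeFactors then (dk k ((p : ℕ) ^ r.factorization (p : ℕ)) : ℂ) else 1
  let uF : Nat.Primes → ℂ := fun p =>
    if (p : ℕ) ∈ r.primeFactors then
      ((1 - χ (p : ℕ) * ((p : ℕ) : ℂ) ^ (-s)) ^ k *
        ∑' j : ℕ, (dk k ((p : ℕ) ^ (j + r.factorization (p : ℕ))) : ℂ) *
          χ (((p : ℕ) : ZMod N) ^ j) * ((p : ℕ) : ℂ) ^ (-(j : ℂ) * s))
    else 1
  have heF : HasProd eF (dk k r : ℂ) := by
    have h1 : HasProd eF (∏ p ∈ S, eF p) :=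
      hasProd_prod_of_ne_finset_one (fun p hp => if_neg (fun hmem => hp ((hmemS p).mpr hmem)))
    have h2 : ∏ p ∈ S, eF p = ∏ q ∈ r.primeFactors, (dk k (q ^ r.factorization q) : ℂ) := by
      rw [show ∏ p ∈ S, eF p
          = ∏ p ∈ S, (dk k ((p : ℕ) ^ r.factorization (p : ℕ)) : ℂ) from
        Finset.prod_congr rfl fun p hp => if_pos ((hmemS p).mp hp)]
      exact hprodS (fun q => (dk k (q ^ r.factorization q) : ℂ))
    have h3 : (dk k r : ℂ) = ∏ q ∈ r.primeFactors, (dk k (q ^ r.factorization q) : ℂ) := by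
      rw [ArithmeticFunction.IsMultiplicative.multiplicative_factorization _
        (dk_isMultiplicative k) hr0, Finsupp.prod, Nat.support_factorization]
      push_cast
      rfl
    rw [h2, ← h3] at h1
    exact h1
  have huF : HasProd uF (gkChi k χ s r) := by
    have h1 : HasProd uF (∏ p ∈ S, uF p) :=
      hasProd_prod_of_ne_finset_one (fun p hp => if_neg (fun hmem => hp ((hmemS p).mpr hmem)))
    have h2 : ∏ p ∈ S, uF p = gkChi k χ s r := by
      rw [show ∏ p ∈ S, uF p
          = ∏ p ∈ S, ((1 - χ ((p : ℕ)) * ((p : ℕ) : ℂ) ^ (-s)) ^ k *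
            ∑' j : ℕ, (dk k ((p : ℕ) ^ (j + r.factorization (p : ℕ))) : ℂ) *
              χ (((p : ℕ) : ZMod N) ^ j) * ((p : ℕ) : ℂ) ^ (-(j : ℂ) * s)) from
        Finset.prod_congr rfl fun p hp => if_pos ((hmemS p).mp hp)]
      exact hprodS (fun q => ((1 - χ q * (q : ℂ) ^ (-s)) ^ k *
        ∑' j : ℕ, (dk k (q ^ (j + r.factorization q)) : ℂ) *
          χ ((q : ZMod N) ^ j) * (q : ℂ) ^ (-(j : ℂ) * s)))
    rw [h2] at h1
    exact h1
  -- the key pointwise identity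
  have hkey : ∀ p : Nat.Primes,
      eF p * (∑' e : ℕ, G ((p : ℕ) ^ e)) = uF p * ((1 - f₀ (p : ℕ))⁻¹) ^ k := by
    rintro ⟨p, hp⟩
    simp only [eF, uF]
    set x : ℂ := χ p * (p : ℂ) ^ (-s) with hxdef
    have hxf : f₀ p = x := rfl
    have hp1 : (1 : ℝ) < (p : ℝ) := by exact_mod_cast hp.one_lt
    have hxnorm : ‖x‖ < 1 := by
      have h1 : ‖(p : ℂ) ^ (-s)‖ = (p : ℝ) ^ (-s).re :=
        Complex.norm_natCast_cpow_of_pos hp.pos _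
      calc ‖x‖ ≤ 1 * ‖(p : ℂ) ^ (-s)‖ := by
            rw [hxdef, norm_mul]
            gcongr
            exact χ.norm_le_one _
        _ < 1 := by
            rw [one_mul, h1, Complex.neg_re]
            exact Real.rpow_lt_one_of_one_lt_of_neg hp1 (by linarith)
    have hx1 : (1 : ℂ) - x ≠ 0 := by
      intro h
      have : x = 1 := by linear_combination -h
      rw [this] at hxnorm
      simp at hxnorm
    have hxe : ∀ e : ℕ, f₀ (p ^ e) = x ^ e := by
      intro e
      rw [map_pow, hxf]
    have hcpow : ∀ j : ℕ, (p : ℂ) ^ (-(j : ℂ) * s) = ((p : ℂ) ^ (-s)) ^ j := by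
      intro j
      rw [show -(j : ℂ) * s = (j : ℂ) * (-s) by ring, Complex.cpow_nat_mul]
    by_cases hmem : p ∈ r.primeFactors
    · rw [if_pos hmem, if_pos hmem]
      have hterm : ∀ e : ℕ, (dk k (p ^ r.factorization p) : ℂ) * G (p ^ e)
          = (dk k (p ^ (e + r.factorization p)) : ℂ) * x ^ e := by
        intro e
        have hnat : (dk k (p ^ r.factorization p) : ℂ) * (dk k (r * p ^ e) : ℂ)
            = (dk k (p ^ (e + r.factorization p)) : ℂ) * (dk k r : ℂ) := by
          exact_mod_cast congrArg (fun t : ℕ => (t : ℂ)) (dk_ord k hp hr0 e)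
        rw [hGdef]
        simp only
        rw [hxe e]
        field_simp
        linear_combination x ^ e * hnat
      have hsum : ∑' j : ℕ, (dk k (p ^ (j + r.factorization p)) : ℂ) *
          χ ((p : ZMod N) ^ j) * (p : ℂ) ^ (-(j : ℂ) * s)
          = ∑' e : ℕ, (dk k (p ^ (e + r.factorization p)) : ℂ) * x ^ e := by
        refine tsum_congr fun j => ?_
        rw [hcpow j, hxdef, mul_pow,
          show χ ((p : ZMod N) ^ j) = (χ (p : ZMod N)) ^ j from map_pow χ _ j]
        ring
      calc (dk k (p ^ r.factorization p) : ℂ) * (∑' e : ℕ, G (p ^ e))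
          = ∑' e : ℕ, (dk k (p ^ r.factorization p) : ℂ) * G (p ^ e) := by
            rw [tsum_mul_left]
        _ = ∑' e : ℕ, (dk k (p ^ (e + r.factorization p)) : ℂ) * x ^ e := tsum_congr hterm
        _ = ((1 - x) ^ k *
              ∑' j : ℕ, (dk k (p ^ (j + r.factorization p)) : ℂ) * χ ((p : ZMod N) ^ j) *
                (p : ℂ) ^ (-(j : ℂ) * s)) * ((1 - f₀ p)⁻¹) ^ k := by
            rw [hsum, hxf]
            rw [show ((1 - x) ^ k *
                ∑' e : ℕ, (dk k (p ^ (e + r.factorization p)) : ℂ) * x ^ e) * ((1 - x)⁻¹) ^ k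
                = ((1 - x) * (1 - x)⁻¹) ^ k *
                  ∑' e : ℕ, (dk k (p ^ (e + r.factorization p)) : ℂ) * x ^ e from by
              rw [mul_pow]; ring]
            rw [mul_inv_cancel₀ hx1, one_pow, one_mul]
    · rw [if_neg hmem, if_neg hmem, one_mul, one_mul]
      have hpr : ¬ p ∣ r := fun hdvd => hmem (Nat.mem_primeFactors.mpr ⟨hp, hdvd, hr0⟩)
      have hco : ∀ e : ℕ, Nat.Coprime r (p ^ e) := fun e =>
        (((Nat.Prime.coprime_iff_not_dvd hp).mpr hpr).symm).pow_right e
      have hterm : ∀ e : ℕ, G (p ^ e) = (dk k (p ^ e) : ℂ) * x ^ e := by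
        intro e
        have : dk k (r * p ^ e) = dk k r * dk k (p ^ e) :=
          (dk_isMultiplicative k).map_mul_of_coprime (hco e)
        rw [hGdef]
        simp only
        rw [this, hxe e]
        push_cast
        field_simp
      rw [tsum_congr hterm, (dk_geom k hp hxnorm).2, hxf]
  -- assemble
  have h1 : HasProd (fun p : Nat.Primes => eF p * (∑' e : ℕ, G ((p : ℕ) ^ e)))
      ((dk k r : ℂ) * ∑' m : ℕ, G m) := heF.mul hG
  have h2 : HasProd (fun p : Nat.Primes => uF p * ((1 - f₀ (p : ℕ))⁻¹) ^ k)
      (gkChi k χ s r * (∑' n : ℕ, f₀ n) ^ k) := huF.mul hLk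
  have hfun : (fun p : Nat.Primes => eF p * (∑' e : ℕ, G ((p : ℕ) ^ e)))
      = (fun p : Nat.Primes => uF p * ((1 - f₀ (p : ℕ))⁻¹) ^ k) := funext hkey
  rw [hfun] at h1
  have heq : (dk k r : ℂ) * ∑' m : ℕ, G m = gkChi k χ s r * (∑' n : ℕ, f₀ n) ^ k :=
    h1.unique h2
  have hLHS : ∑' m : ℕ, (dk k (r * m) : ℂ) * χ m * (m : ℂ) ^ (-s)
      = (dk k r : ℂ) * ∑' m : ℕ, G m := by
    rw [← tsum_mul_left]
    refine tsum_congr fun m => ?_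
    rw [hGdef]
    simp only
    rw [hf₀app]
    field_simp
  have hRHS : (∑' n : ℕ, f₀ n) = ∑' n : ℕ, χ n * (n : ℂ) ^ (-s) := tsum_congr fun n => rfl
  rw [hLHS, heq, hRHS]
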